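/- arXiv:1705.00454 — 5 statements merged into one kernel-verified Lean document; each statement's English description precedes it below -/
import Mathlib

section
/- Let z > 0 and let x ≥ 0 be real, and set c = −i·x/z². Then |S(c)| ≤ √5 · e^{−√x}, i.e. |sech((1−i)·√x)| ≤ √5 · e^{−√x}. -/
/-- Principal branch complex square root. -/
noncomputable def csqrt (c : ℂ) : ℂ := c ^ ((1 : ℂ) / 2)

/-- `S(c) = sech(√(2c)·z)` (principal square root). -/
noncomputable def Sf (z : ℝ) (c : ℂ) : ℂ := 1 / Complex.cosh (csqrt (2 * c) * (z : ℂ))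

/-- `T(c) = tanh(√(2c)·z)/√(2c)` with `T(0) = z` (principal square root). -/
noncomputable def Tf (z : ℝ) (c : ℂ) : ℂ :=
  if c = 0 then (z : ℂ) else Complex.tanh (csqrt (2 * c) * (z : ℂ)) / csqrt (2 * c)

lemma csqrt_sq (w : ℂ) : (csqrt w) ^ 2 = w := by
  have h := Complex.cpow_nat_inv_pow w (n := 2) (by norm_num)
  norm_num at h
  simpa [csqrt, one_div] using h

lemma csqrt_re_nonneg (w : ℂ) : 0 ≤ (csqrt w).re := by
  rcases eq_or_ne w 0 with h | h
  · simp [csqrt, h, Complex.zero_cpow (by norm_num : (1:ℂ)/2 ≠ 0)]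
  · rw [csqrt, Complex.cpow_def_of_ne_zero h, Complex.exp_re]
    apply mul_nonneg (Real.exp_nonneg _)
    apply Real.cos_nonneg_of_mem_Icc
    have h1 := Complex.neg_pi_lt_arg w
    have h2 := Complex.arg_le_pi w
    have him : (Complex.log w * ((1:ℂ)/2)).im = w.arg / 2 := by
      simp [Complex.mul_im, Complex.log_im, Complex.log_re]
      ring
    rw [him]
    constructor <;> [linarith; linarith]

lemma exp_sum7 (u : ℝ) (hu : 0 ≤ u) :
    1 + u + u^2/2 + u^3/6 + u^4/24 + u^5/120 + u^6/720 ≤ Real.exp u := by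
  have h := Real.sum_le_exp_of_nonneg hu 7
  simp [Finset.sum_range_succ, Nat.factorial] at h
  linarith

lemma key_exp_bound (t : ℝ) (ht : 0 ≤ t) :
    Real.exp (2*t) ≤ 5 * (Real.sinh t ^ 2 + Real.cos t ^ 2) := by
  have hA : Real.exp t * Real.exp (-t) = 1 := by
    rw [← Real.exp_add]; simp
  have h2 : Real.exp (2*t) = Real.exp t ^ 2 := by
    rw [two_mul, Real.exp_add, sq]
  have hsinh : Real.sinh t = (Real.exp t - Real.exp (-t))/2 := Real.sinh_eq t
  have hs2 : Real.sinh t ^ 2 = (Real.exp (2*t) + Real.exp (-t)^2 - 2)/4 := by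
    rw [hsinh, h2]; linear_combination (-(1:ℝ)/2) * hA
  have hBpos : (0:ℝ) < Real.exp (-t) := Real.exp_pos _
  rcases le_or_gt t 1.16 with h | h
  · have hcos : 1 - t^2/2 ≤ Real.cos t := Real.one_sub_sq_div_two_le_cos
    have hc0 : (0:ℝ) ≤ 1 - t^2/2 := by nlinarith
    have hcsq : (1-t^2/2)^2 ≤ Real.cos t ^ 2 := by nlinarith
    have hexp : 1 + 2*t + (2*t)^2/2 + (2*t)^3/6 + (2*t)^4/24 + (2*t)^5/120 + (2*t)^6/720
        ≤ Real.exp (2*t) := exp_sum7 (2*t) (by linarith)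
    have hpoly : (5:ℝ)/2 ≤ (1+2*t+2*t^2+(4/3)*t^3+(2/3)*t^4+(4/15)*t^5+(4/45)*t^6)/4
        + 5*(1-t^2/2)^2 := by
      nlinarith [sq_nonneg (t-1), sq_nonneg t, sq_nonneg (t*(t-1)), sq_nonneg (t^2-1),
        sq_nonneg (t^3), mul_nonneg ht (sq_nonneg (t-1))]
    nlinarith [hs2, sq_nonneg (Real.exp (-t))]
  · have h232 : (10:ℝ) ≤ Real.exp 2.32 := by
      have := exp_sum7 2.32 (by norm_num)
      nlinarith
    have hmono : Real.exp 2.32 ≤ Real.exp (2*t) := Real.exp_le_exp.mpr (by linarith)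
    nlinarith [hs2, sq_nonneg (Real.exp (-t)), sq_nonneg (Real.cos t)]

lemma abs_cosh_sq (t : ℝ) :
    ‖Complex.cosh ((1 - Complex.I) * (t:ℂ))‖ ^ 2
      = Real.sinh t ^ 2 + Real.cos t ^ 2 := by
  have harg : (1 - Complex.I) * (t:ℂ) = (t:ℂ) + ((-t:ℝ):ℂ) * Complex.I := by
    push_cast; ring
  rw [harg, Complex.cosh_add, Complex.cosh_mul_I, Complex.sinh_mul_I, Complex.sq_norm,
    Complex.normSq_apply]
  simp [Complex.mul_re, Complex.mul_im, Complex.add_re, Complex.add_im,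
    Complex.cosh_ofReal_re, Complex.cosh_ofReal_im, Complex.sinh_ofReal_re,
    Complex.sinh_ofReal_im, Complex.cos_ofReal_re, Complex.cos_ofReal_im,
    Complex.sin_ofReal_re, Complex.sin_ofReal_im, Complex.I_re, Complex.I_im]
  have hc := Real.cosh_sq t
  have hsc := Real.sin_sq_add_cos_sq t
  nlinarith [hc, hsc]

lemma sech_bound (t : ℝ) (ht : 0 ≤ t) :
    ‖1 / Complex.cosh ((1 - Complex.I) * (t:ℂ))‖ ≤
      Real.sqrt 5 * Real.exp (-t) := by
  set A := ‖Complex.cosh ((1 - Complex.I) * (t:ℂ))‖ with hA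
  have habs2 : A ^ 2 = Real.sinh t ^ 2 + Real.cos t ^ 2 := abs_cosh_sq t
  have hkey := key_exp_bound t ht
  have hE : (0:ℝ) < Real.exp (2*t) := Real.exp_pos _
  have hApos : 0 < A := by
    have h2 : 0 < A ^ 2 := by rw [habs2]; nlinarith
    nlinarith [norm_nonneg (Complex.cosh ((1 - Complex.I) * (t:ℂ)))]
  rw [norm_div, norm_one, ← hA, div_le_iff₀ hApos]
  have hs5 : Real.sqrt 5 ^ 2 = 5 := Real.sq_sqrt (by norm_num)
  have hs5n : (0:ℝ) ≤ Real.sqrt 5 := Real.sqrt_nonneg 5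
  have hprod : Real.exp (-t) ^ 2 * Real.exp (2*t) = 1 := by
    rw [sq, mul_assoc, ← Real.exp_add, ← Real.exp_add,
      show -t + (-t + 2*t) = 0 by ring, Real.exp_zero]
  have hmul := mul_le_mul_of_nonneg_left (habs2 ▸ hkey) (sq_nonneg (Real.exp (-t)))
  have hrhs : 1 ≤ (Real.sqrt 5 * Real.exp (-t) * A)^2 := by nlinarith
  nlinarith [mul_nonneg (mul_nonneg hs5n (Real.exp_nonneg (-t))) (le_of_lt hApos)]

theorem S_abs_exp_bound (z x : ℝ) (hz : 0 < z) (hx : 0 ≤ x)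
    (c : ℂ) (hc : c = -Complex.I * (x : ℂ) / (z : ℂ) ^ 2) :
    ‖Sf z c‖ ≤ Real.sqrt 5 * Real.exp (-Real.sqrt x) ∧
    ‖1 / Complex.cosh ((1 - Complex.I) * (Real.sqrt x : ℂ))‖ ≤
      Real.sqrt 5 * Real.exp (-Real.sqrt x) := by
  have hz0 : (z:ℂ) ≠ 0 := Complex.ofReal_ne_zero.mpr hz.ne'
  have hmain : csqrt (2*c) * (z:ℂ) = (1 - Complex.I) * ((Real.sqrt x : ℝ):ℂ) := by
    rcases eq_or_lt_of_le hx with hx0 | hx0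
    · have hc0 : c = 0 := by rw [hc, ← hx0]; simp
      rw [hc0]
      simp [csqrt, Complex.zero_cpow (show (1:ℂ)/2 ≠ 0 by norm_num), ← hx0, Real.sqrt_zero]
    · set s := Real.sqrt x with hsdef
      have hs : 0 < s := Real.sqrt_pos.mpr hx0
      have hs2 : s^2 = x := Real.sq_sqrt hx
      have hsx : ((s:ℝ):ℂ)^2 = (x:ℂ) := by exact_mod_cast congrArg (fun r : ℝ => (r:ℂ)) hs2
      set a : ℂ := (1 - Complex.I) * ((s/z : ℝ):ℂ) with ha
      have ha2 : a^2 = 2*c := by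
        rw [ha, hc]
        push_cast
        field_simp
        linear_combination (-2*Complex.I) * hsx + ((s:ℝ):ℂ)^2 * Complex.I_sq
      set b : ℂ := csqrt (2*c) with hb
      have hb2 : b^2 = 2*c := csqrt_sq _
      have hfact : (b - a) * (b + a) = 0 := by linear_combination hb2 - ha2
      have hare : a.re = s/z := by
        rw [ha]
        simp [Complex.mul_re]
      rcases mul_eq_zero.mp hfact with h0 | h0
      · have hba : b = a := sub_eq_zero.mp h0
        rw [hba, ha]
        push_cast
        field_simp
      · exfalso
        have hbre : 0 ≤ b.re := csqrt_re_nonneg (2*c)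
        have hban : b = -a := by linear_combination h0
        have : b.re = -(s/z) := by rw [hban, Complex.neg_re, hare]
        have hsz : 0 < s/z := div_pos hs hz
        rw [this] at hbre
        linarith
  constructor
  · simp only [Sf]
    rw [hmain]
    exact sech_bound (Real.sqrt x) (Real.sqrt_nonneg x)
  · exact sech_bound (Real.sqrt x) (Real.sqrt_nonneg x)
end

section
/- Let z > 0 and let x > 0 be real, and set c = −i·x/z². Then T_I(c) ≥ (z/3)·min(x, 1/√x). -/
section Aux
open Real Set

lemma sinh_sq_ge (u : ℝ) : u ^ 2 ≤ Real.sinh u ^ 2 := by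
  rcases le_or_gt 0 u with h | h
  · nlinarith [Real.self_le_sinh_iff.2 h]
  · have := Real.self_le_sinh_iff.2 (neg_nonneg.2 h.le)
    rw [Real.sinh_neg] at this
    nlinarith
lemma cosh_ge (t : ℝ) : 1 + t ^ 2 / 2 ≤ Real.cosh t := by
  have h := Real.cosh_two_mul (t/2)
  have h2 := Real.cosh_sq (t/2)
  have h3 := sinh_sq_ge (t/2)
  have he : 2 * (t/2) = t := by ring
  rw [he] at h
  nlinarith
lemma chainK (t : ℝ) : 2 ≤ Real.cosh t + Real.cos t := by
  have h1 : 1 - t ^ 2 / 2 ≤ Real.cos t := Real.one_sub_sq_div_two_le_cos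
  have h2 := cosh_ge t
  linarith

lemma nonneg_of_deriv (f : ℝ → ℝ) (hd : Differentiable ℝ f) (h0 : f 0 = 0)
    (hd0 : ∀ u, 0 < u → 0 ≤ deriv f u) {t : ℝ} (ht : 0 ≤ t) : 0 ≤ f t := by
  have := monotoneOn_of_deriv_nonneg (convex_Ici 0) hd.continuous.continuousOn
    (hd.differentiableOn) (by
      intro u hu
      rw [interior_Ici] at hu
      exact hd0 u hu)
  have h := this (self_mem_Ici) (mem_Ici.2 ht) ht
  rw [h0] at h
  exact h

lemma chainL {t : ℝ} (ht : 0 ≤ t) : 2 * t ≤ Real.sinh t + Real.sin t := by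
  have key := nonneg_of_deriv (fun u => Real.sinh u + Real.sin u - 2 * u)
    (by fun_prop) (by simp)
    (by
      intro u hu
      have h : HasDerivAt (fun u => Real.sinh u + Real.sin u - 2 * u)
          (Real.cosh u + Real.cos u - 2) u := by
        have := ((Real.hasDerivAt_sinh u).add (Real.hasDerivAt_sin u)).sub
          ((hasDerivAt_id u).const_mul (2:ℝ))
        exact this.congr_deriv (by ring)
      rw [h.deriv]
      linarith [chainK u]) ht
  simp only [sub_nonneg] at key
  linarith

lemma chainH {t : ℝ} (ht : 0 ≤ t) : t ^ 2 ≤ Real.cosh t - Real.cos t := by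
  have key := nonneg_of_deriv (fun u => Real.cosh u - Real.cos u - u ^ 2)
    (by fun_prop) (by simp)
    (by
      intro u hu
      have h : HasDerivAt (fun u => Real.cosh u - Real.cos u - u ^ 2)
          (Real.sinh u + Real.sin u - 2 * u) u := by
        have := ((Real.hasDerivAt_cosh u).sub (Real.hasDerivAt_cos u)).sub
          (hasDerivAt_pow 2 u)
        exact this.congr_deriv (by push_cast; ring)
      rw [h.deriv]
      linarith [chainL hu.le]) ht
  simp only [sub_nonneg] at key
  linarith

lemma chainG {t : ℝ} (ht : 0 ≤ t) : t ^ 3 / 3 ≤ Real.sinh t - Real.sin t := by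
  have key := nonneg_of_deriv (fun u => Real.sinh u - Real.sin u - u ^ 3 / 3)
    (by fun_prop) (by simp)
    (by
      intro u hu
      have h : HasDerivAt (fun u => Real.sinh u - Real.sin u - u ^ 3 / 3)
          (Real.cosh u - Real.cos u - u ^ 2) u := by
        have := ((Real.hasDerivAt_sinh u).sub (Real.hasDerivAt_sin u)).sub
          ((hasDerivAt_pow 3 u).div_const 3)
        exact this.congr_deriv (by push_cast; ring)
      rw [h.deriv]
      linarith [chainH hu.le]) ht
  simp only [sub_nonneg] at key
  linarith


lemma sin_one_lb : (25/32 : ℝ) ≤ Real.sin 1 := by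
  have h := Real.sin_bound (x := 1) (by norm_num)
  rw [abs_le] at h
  norm_num at h ⊢
  linarith [h.1]

lemma cos_two_ub : Real.cos 2 ≤ -(113/512 : ℝ) := by
  have h : Real.cos 2 = 2 * Real.cos 1 ^ 2 - 1 := by
    have := Real.cos_two_mul 1
    norm_num at this
    exact this
  have h2 := Real.sin_sq_add_cos_sq 1
  have h3 := sin_one_lb
  nlinarith

lemma exp_two_lb : (7.389 : ℝ) ≤ Real.exp 2 := by
  have h : Real.exp 2 = Real.exp 1 * Real.exp 1 := by
    rw [← Real.exp_add]; norm_num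
  have := Real.exp_one_gt_d9
  nlinarith

lemma exp_two_ub : Real.exp 2 ≤ (7.3891 : ℝ) := by
  have h : Real.exp 2 = Real.exp 1 * Real.exp 1 := by
    rw [← Real.exp_add]; norm_num
  have := Real.exp_one_lt_d9
  have hp := Real.exp_pos 1
  nlinarith

lemma exp_neg_two_ub : Real.exp (-2) ≤ (0.1354 : ℝ) := by
  have h : Real.exp (-2) = 1 / Real.exp 2 := by
    rw [Real.exp_neg]; ring
  rw [h]
  rw [div_le_iff₀ (by positivity)]
  nlinarith [exp_two_lb]

lemma cosh_cos_two : Real.cosh 2 + Real.cos 2 ≤ 4 := by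
  have h : Real.cosh 2 = (Real.exp 2 + Real.exp (-2)) / 2 := Real.cosh_eq 2
  have := exp_two_ub
  have := exp_neg_two_ub
  have := cos_two_ub
  linarith

lemma F_mono : MonotoneOn (fun t => Real.cosh t + Real.cos t) (Icc (0:ℝ) 2) := by
  apply monotoneOn_of_deriv_nonneg (convex_Icc 0 2)
    (by fun_prop)
    (Differentiable.differentiableOn (by fun_prop))
  intro u hu
  rw [interior_Icc] at hu
  have h : HasDerivAt (fun t => Real.cosh t + Real.cos t)
      (Real.sinh u + -Real.sin u) u :=
    (Real.hasDerivAt_cosh u).add (Real.hasDerivAt_cos u)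
  rw [h.deriv]
  have := chainG hu.1.le
  nlinarith [pow_nonneg hu.1.le 3]

lemma lemA {t : ℝ} (h0 : 0 ≤ t) (h2 : t ≤ 2) :
    t ^ 3 / 12 * (Real.cosh t + Real.cos t) ≤ Real.sinh t - Real.sin t := by
  have hF : Real.cosh t + Real.cos t ≤ 4 := by
    have := F_mono (Set.mem_Icc.2 ⟨h0, h2⟩) (Set.mem_Icc.2 (by norm_num)) h2
    simp only at this
    linarith [cosh_cos_two]
  have hG := chainG h0
  nlinarith [pow_nonneg h0 3]

lemma lemB {t : ℝ} (h2 : 2 ≤ t) :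
    2 / 3 * (Real.cosh t + Real.cos t) ≤ Real.sinh t - Real.sin t := by
  have hch : Real.cosh t = (Real.exp t + Real.exp (-t)) / 2 := Real.cosh_eq t
  have hsh : Real.sinh t = (Real.exp t - Real.exp (-t)) / 2 := Real.sinh_eq t
  have hsin : Real.sin t ≤ 1 := Real.sin_le_one t
  have hent : Real.exp (-t) ≤ Real.exp (-2) := Real.exp_le_exp.2 (by linarith)
  have hen2 := exp_neg_two_ub
  rcases le_or_gt t 3 with h3 | h3
  · -- 2 ≤ t ≤ 3
    have hcos : Real.cos t ≤ Real.cos 2 :=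
      Real.cos_le_cos_of_nonneg_of_le_pi (by norm_num) (by linarith [Real.pi_gt_three]) h2
    have het : Real.exp 2 ≤ Real.exp t := Real.exp_le_exp.2 h2
    have := exp_two_lb
    have := cos_two_ub
    linarith
  · -- t ≥ 3
    have het : Real.exp 3 ≤ Real.exp t := Real.exp_le_exp.2 h3.le
    have he3 : (19.5 : ℝ) ≤ Real.exp 3 := by
      have h : Real.exp 3 = Real.exp 1 * Real.exp 1 * Real.exp 1 := by
        rw [← Real.exp_add, ← Real.exp_add]; norm_num
      have := Real.exp_one_gt_d9
      nlinarith
    have hcos : Real.cos t ≤ 1 := Real.cos_le_one t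
    linarith


lemma div_im_explicit (a b p q r : ℝ) (hr : r ≠ 0) (hpq : p^2 + q^2 ≠ 0) :
    (((a:ℂ) + (b:ℂ)*Complex.I) / (((p:ℂ) + (q:ℂ)*Complex.I) * ((r:ℂ) * (1-Complex.I)))).im
    = (b*(p+q) + a*(p-q)) / (2*r*(p^2+q^2)) := by
  set W := ((p:ℂ) + (q:ℂ)*Complex.I) * ((r:ℂ) * (1-Complex.I)) with hW
  have hWre : W.re = r*(p+q) := by
    simp [hW, Complex.mul_re, Complex.mul_im]; ring
  have hWim : W.im = r*(q-p) := by
    simp [hW, Complex.mul_re, Complex.mul_im]; ring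
  have hWn : Complex.normSq W = 2*r^2*(p^2+q^2) := by
    rw [Complex.normSq_apply, hWre, hWim]; ring
  rw [Complex.div_im, hWre, hWim, hWn]
  simp only [Complex.add_re, Complex.add_im, Complex.ofReal_re, Complex.ofReal_im,
    Complex.mul_re, Complex.mul_im, Complex.I_re, Complex.I_im]
  field_simp
  ring



end Aux

open Real Set in
theorem T_im_lower_bound (z x : ℝ) (hz : 0 < z) (hx : 0 < x)
    (c : ℂ) (hc : c = -Complex.I * (x : ℂ) / (z : ℂ) ^ 2) :
    (z / 3) * min x (1 / Real.sqrt x) ≤ (Tf z c).im := by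
  set s := Real.sqrt x with hsdef
  have hs : 0 < s := Real.sqrt_pos.2 hx
  have hsx : s ^ 2 = x := Real.sq_sqrt hx.le
  have hz' : (z:ℂ) ≠ 0 := by exact_mod_cast hz.ne'
  set w : ℂ := ((s/z : ℝ) : ℂ) * (1 - Complex.I) with hwdef
  have hwre : w.re = s / z := by simp [hwdef]
  have hI : (1 - Complex.I)^2 = -2*Complex.I := by linear_combination Complex.I_sq
  have hdiv : ((s/z : ℝ) : ℂ)^2 = (x:ℂ)/(z:ℂ)^2 := by
    have hsx' : ((s:ℂ)) ^ 2 = (x:ℂ) := by exact_mod_cast congrArg (fun r : ℝ => (r:ℂ)) hsx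
    push_cast
    rw [div_pow, hsx']
  have hw2 : w ^ 2 = 2 * c := by
    calc w^2 = ((s/z : ℝ) : ℂ)^2 * (1 - Complex.I)^2 := by ring
    _ = (x:ℂ)/(z:ℂ)^2 * (-2*Complex.I) := by rw [hI, hdiv]
    _ = 2 * c := by rw [hc]; ring
  have hcsqrt : csqrt (2 * c) = w := by
    rw [← hw2]
    unfold csqrt
    rw [one_div]
    exact Complex.sq_cpow_two_inv (by rw [hwre]; positivity)
  have hwne : w ≠ 0 := by
    have h : w.re ≠ 0 := by rw [hwre]; positivity
    exact fun h0 => h (by rw [h0]; simp)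
  have hcne : c ≠ 0 := by
    intro h
    apply hwne
    have h2 := hw2
    rw [h, mul_zero, pow_eq_zero_iff two_ne_zero] at h2
    exact h2
  have hTf : Tf z c = Complex.tanh ((s:ℂ) * (1 - Complex.I)) / w := by
    rw [Tf, if_neg hcne, hcsqrt]
    congr 2
    rw [hwdef]
    push_cast
    field_simp
  have hu : (s:ℂ) * (1 - Complex.I) = (s:ℂ) + ((-s : ℝ):ℂ) * Complex.I := by
    push_cast; ring
  have hsinh : Complex.sinh ((s:ℂ) * (1 - Complex.I))
      = ((Real.sinh s * Real.cos s : ℝ):ℂ) + ((-(Real.cosh s * Real.sin s) : ℝ):ℂ) * Complex.I := by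
    rw [hu, Complex.sinh_add, Complex.cosh_mul_I, Complex.sinh_mul_I]
    push_cast
    rw [Complex.cos_neg, Complex.sin_neg]
    ring
  have hcosh : Complex.cosh ((s:ℂ) * (1 - Complex.I))
      = ((Real.cosh s * Real.cos s : ℝ):ℂ) + ((-(Real.sinh s * Real.sin s) : ℝ):ℂ) * Complex.I := by
    rw [hu, Complex.cosh_add, Complex.cosh_mul_I, Complex.sinh_mul_I]
    push_cast
    rw [Complex.cos_neg, Complex.sin_neg]
    ring
  set D : ℝ := (Real.cosh s * Real.cos s)^2 + (Real.sinh s * Real.sin s)^2 with hDdef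
  have hD : 0 < D := by
    rcases eq_or_ne (Real.cos s) 0 with h | h
    · have hsn2 : Real.sin s ^ 2 = 1 := by
        have h2 := Real.sin_sq_add_cos_sq s
        rw [h] at h2
        nlinarith
      have hsnne : Real.sin s ≠ 0 := fun h0 => by rw [h0] at hsn2; norm_num at hsn2
      have hshp : 0 < Real.sinh s := Real.sinh_pos_iff.2 hs
      have hpos : 0 < (Real.sinh s * Real.sin s)^2 :=
        pow_two_pos_of_ne_zero (mul_ne_zero hshp.ne' hsnne) 
      nlinarith [sq_nonneg (Real.cosh s * Real.cos s)]
    · have h1 : 0 < (Real.cosh s * Real.cos s)^2 :=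
        pow_two_pos_of_ne_zero (mul_ne_zero (Real.cosh_pos s).ne' h)
      nlinarith [sq_nonneg (Real.sinh s * Real.sin s)]
  have hco : Real.cosh_sq s = Real.cosh_sq s := rfl
  have him : (Tf z c).im = (Real.sinh s * Real.cosh s - Real.sin s * Real.cos s) * z / (2*s*D) := by
    rw [hTf, Complex.tanh_eq_sinh_div_cosh, div_div, hsinh, hcosh, hwdef]
    have hpq : (Real.cosh s * Real.cos s)^2 + (-(Real.sinh s * Real.sin s))^2 ≠ 0 := by
      have : (Real.cosh s * Real.cos s)^2 + (-(Real.sinh s * Real.sin s))^2 = D := by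
        rw [hDdef]; ring
      rw [this]; exact hD.ne'
    rw [div_im_explicit (Real.sinh s * Real.cos s) (-(Real.cosh s * Real.sin s))
      (Real.cosh s * Real.cos s) (-(Real.sinh s * Real.sin s)) (s/z)
      (by positivity) hpq]
    have e1 : 2*(s/z)*((Real.cosh s * Real.cos s)^2+(-(Real.sinh s * Real.sin s))^2)
        = (2*s*D)/z := by rw [hDdef]; field_simp; try ring
    rw [e1, div_div_eq_mul_div]
    congr 1
    have h1 := Real.cosh_sq s
    have h2 := Real.sin_sq_add_cos_sq s
    linear_combination z*((Real.sinh s * Real.cosh s)*h2 - (Real.sin s * Real.cos s)*h1)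
  rw [him]
  have hden : (0:ℝ) < 2*s*D := by
    have := hD; positivity
  rw [le_div_iff₀ hden]
  have hc2 : Real.cosh (2*s) + Real.cos (2*s) = 2*D := by
    rw [Real.cosh_two_mul, Real.cos_two_mul, hDdef]
    have h1 := Real.cosh_sq s
    have h2 := Real.sin_sq_add_cos_sq s
    nlinarith [h1, h2]
  have hs2 : Real.sinh (2*s) - Real.sin (2*s)
      = 2*(Real.sinh s * Real.cosh s - Real.sin s * Real.cos s) := by
    rw [Real.sinh_two_mul, Real.sin_two_mul]; ring
  rcases le_or_gt x 1 with hx1 | hx1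
  · have hs1 : s ≤ 1 := by nlinarith
    have hmin : min x (1 / s) = x := by
      apply min_eq_left
      have h1 : 1 ≤ 1/s := by rw [le_div_iff₀ hs]; linarith
      linarith
    rw [hmin, ← hsx]
    have hA := lemA (by positivity : (0:ℝ) ≤ 2*s) (by linarith)
    rw [hc2, hs2] at hA
    have hA2 := mul_le_mul_of_nonneg_left hA (by positivity : (0:ℝ) ≤ z/2)
    linarith [hA2]
  · have hs1 : 1 ≤ s := by nlinarith
    have hmin : min x (1 / s) = 1/s := by
      apply min_eq_right
      have h1 : 1/s ≤ 1 := by rw [div_le_one hs]; linarith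
      linarith
    rw [hmin]
    have hB := lemB (by linarith : (2:ℝ) ≤ 2*s)
    rw [hc2, hs2] at hB
    have hB2 := mul_le_mul_of_nonneg_left hB (by positivity : (0:ℝ) ≤ z/2)
    have e2 : z/3*(1/s)*(2*s*D) = 2/3*z*D := by field_simp
    rw [e2]
    linarith [hB2]
end

section
/- Let z > 0 and let x > 0 be real, and set c = −i·x/z². Then S_I(c)² ≤ (3x/(2z)) · T_I(c); equivalently, S_I(c)²/T_I(c) ≤ 3x/(2z). -/
lemma aux_nonneg {f f' : ℝ → ℝ} (hd : ∀ x, HasDerivAt f (f' x) x)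
    (h0 : f 0 = 0) {b : ℝ} (h' : ∀ x, 0 ≤ x → x ≤ b → 0 ≤ f' x) :
    ∀ x, 0 ≤ x → x ≤ b → 0 ≤ f x := by
  intro x hx hxb
  have hb : (0:ℝ) ≤ b := le_trans hx hxb
  have hdiff : Differentiable ℝ f := fun y => (hd y).differentiableAt
  have hmono : MonotoneOn f (Set.Icc 0 b) := by
    apply monotoneOn_of_deriv_nonneg (convex_Icc 0 b) hdiff.continuous.continuousOn
      hdiff.differentiableOn
    intro y hy
    rw [interior_Icc] at hy
    rw [(hd y).deriv]
    exact h' y hy.1.le hy.2.le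
  have := hmono (Set.mem_Icc.2 ⟨le_refl 0, hb⟩) (Set.mem_Icc.2 ⟨hx, hxb⟩) hx
  linarith [h0 ▸ this]

lemma cosh_lb (u : ℝ) (hu : 0 ≤ u) : 1 + u^2/2 ≤ Real.cosh u := by
  have hd : ∀ v : ℝ, HasDerivAt (fun w => Real.cosh w - 1 - w^2/2) (Real.sinh v - v) v := by
    intro v
    have h2 : HasDerivAt (fun w : ℝ => w^2/2) v v := by
      simpa using (hasDerivAt_pow 2 v).div_const 2
    exact ((Real.hasDerivAt_cosh v).sub_const 1).sub h2
  have := aux_nonneg hd (by simp) (b := u)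
    (fun v hv _ => by have := Real.self_le_sinh_iff.2 hv; simp; linarith) u hu le_rfl
  simp at this; linarith

lemma sinh_lb (u : ℝ) (hu : 0 ≤ u) : u + u^3/6 ≤ Real.sinh u := by
  have hd : ∀ v : ℝ, HasDerivAt (fun w => Real.sinh w - w - w^3/6) (Real.cosh v - 1 - v^2/2) v := by
    intro v
    have h2 : HasDerivAt (fun w : ℝ => w^3/6) (v^2/2) v := by
      have := (hasDerivAt_pow 3 v).div_const 6
      norm_num at this
      exact this.congr_deriv (by ring)
    exact ((Real.hasDerivAt_sinh v).sub (hasDerivAt_id v)).sub h2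
  have := aux_nonneg hd (by simp) (b := u)
    (fun v hv _ => by have := cosh_lb v hv; simp; linarith) u hu le_rfl
  simp at this; linarith

lemma cube_lb (u : ℝ) (hu : 0 ≤ u) : u^3/3 ≤ Real.sinh u - Real.sin u := by
  have hd2 : ∀ v : ℝ, HasDerivAt (fun w => Real.sinh w + Real.sin w - 2*w)
      (Real.cosh v + Real.cos v - 2) v := by
    intro v
    exact (((Real.hasDerivAt_sinh v).add (Real.hasDerivAt_sin v)).sub
      ((hasDerivAt_id v).const_mul 2)).congr_deriv (by ring)
  have h2 := aux_nonneg hd2 (by simp) (b := u) (fun v hv _ => by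
    have := cosh_lb v hv; have := Real.one_sub_sq_div_two_le_cos (x := v); simp; linarith)
  have hd1 : ∀ v : ℝ, HasDerivAt (fun w => Real.cosh w - Real.cos w - w^2)
      (Real.sinh v + Real.sin v - 2*v) v := by
    intro v
    have h2' : HasDerivAt (fun w : ℝ => w^2) (2*v) v := by simpa using hasDerivAt_pow 2 v
    exact (((Real.hasDerivAt_cosh v).sub (Real.hasDerivAt_cos v)).sub h2').congr_deriv (by ring)
  have h1 := aux_nonneg hd1 (by simp) (b := u) (fun v hv hvb => by
    have := h2 v hv hvb; simpa using this)
  have hd0 : ∀ v : ℝ, HasDerivAt (fun w => Real.sinh w - Real.sin w - w^3/3)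
      (Real.cosh v - Real.cos v - v^2) v := by
    intro v
    have h3 : HasDerivAt (fun w : ℝ => w^3/3) (v^2) v := by
      have := (hasDerivAt_pow 3 v).div_const 3
      exact this.congr_deriv (by norm_num)
    exact ((Real.hasDerivAt_sinh v).sub (Real.hasDerivAt_sin v)).sub h3
  have h0 := aux_nonneg hd0 (by simp) (b := u) (fun v hv hvb => by
    have := h1 v hv hvb; simpa using this) u hu le_rfl
  simp at h0; linarith

lemma sinh_sin_le (v : ℝ) (hv : 0 ≤ v) (hv3 : v ≤ 3) : Real.sinh v * Real.sin v ≤ v^2 := by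
  have hd3 : ∀ w : ℝ, HasDerivAt (fun y => 2*Real.cosh y*Real.sin y - 2*Real.sinh y*Real.cos y)
      (4 * Real.sinh w * Real.sin w) w := by
    intro w
    have h1 := ((Real.hasDerivAt_cosh w).const_mul 2).mul (Real.hasDerivAt_sin w)
    have h2 := ((Real.hasDerivAt_sinh w).const_mul 2).mul (Real.hasDerivAt_cos w)
    exact (h1.sub h2).congr_deriv (by ring)
  have h3 := aux_nonneg hd3 (by simp) (b := 3) (fun w hw hw3 => by
    have hs : 0 ≤ Real.sin w := Real.sin_nonneg_of_nonneg_of_le_pi hw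
      (hw3.trans (by linarith [Real.pi_gt_three]))
    have hsh : 0 ≤ Real.sinh w := Real.sinh_nonneg_iff.2 hw
    positivity)
  have hd2 : ∀ w : ℝ, HasDerivAt (fun y => 2 - 2*Real.cosh y*Real.cos y)
      (2*Real.cosh w*Real.sin w - 2*Real.sinh w*Real.cos w) w := by
    intro w
    have h1 := ((Real.hasDerivAt_cosh w).const_mul 2).mul (Real.hasDerivAt_cos w)
    exact ((hasDerivAt_const w (2:ℝ)).sub h1).congr_deriv (by ring)
  have h2 := aux_nonneg hd2 (by simp) (b := 3) (fun w hw hw3 => h3 w hw hw3)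
  have hd1 : ∀ w : ℝ, HasDerivAt
      (fun y => 2*y - (Real.cosh y * Real.sin y + Real.sinh y * Real.cos y))
      (2 - 2*Real.cosh w * Real.cos w) w := by
    intro w
    have h1 := (Real.hasDerivAt_cosh w).mul (Real.hasDerivAt_sin w)
    have h2 := (Real.hasDerivAt_sinh w).mul (Real.hasDerivAt_cos w)
    have h3 := (hasDerivAt_id w).const_mul (2:ℝ)
    have hp : Real.cosh w ^ 2 - Real.sinh w ^2 = 1 := Real.cosh_sq_sub_sinh_sq w
    have hq : Real.sin w ^ 2 + Real.cos w ^2 = 1 := Real.sin_sq_add_cos_sq w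
    exact (h3.sub (h1.add h2)).congr_deriv (by nlinarith [hp, hq])
  have h1 := aux_nonneg hd1 (by simp) (b := 3) (fun w hw hw3 => h2 w hw hw3)
  have hd0 : ∀ w : ℝ, HasDerivAt (fun y => y^2 - Real.sinh y * Real.sin y)
      (2*w - (Real.cosh w * Real.sin w + Real.sinh w * Real.cos w)) w := by
    intro w
    have hp : HasDerivAt (fun y : ℝ => y^2) (2*w) w := by simpa using hasDerivAt_pow 2 w
    exact hp.sub ((Real.hasDerivAt_sinh w).mul (Real.hasDerivAt_sin w))
  have h0 := aux_nonneg hd0 (by simp) (b := 3) (fun w hw hw3 => h1 w hw hw3) v hv hv3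
  linarith

lemma case_small (t s c p q : ℝ) (ht : 0 < t)
    (hpyth : p^2 + q^2 = 1) (hpyth2 : c^2 = s^2 + 1) (hs0 : 0 < s) (hp0 : 0 ≤ p)
    (hB : s*p ≤ t^2) (hsinle : p ≤ t) (hts : t ≤ s) (hS : 4*t^3/3 ≤ s*c - p*q) :
    4*(s*p)^2 ≤ 3*t*(s*c - p*q)*((c*q)^2 + (s*p)^2) := by
  have hD : (c*q)^2 + (s*p)^2 = q^2 + s^2 := by nlinarith [hpyth, hpyth2]
  have hD1 : 1 ≤ (c*q)^2 + (s*p)^2 := by rw [hD]; nlinarith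
  have hB2 : (s*p)^2 ≤ t^4 := by nlinarith [mul_nonneg hs0.le hp0]
  have hXY : (4*t^3/3)*1 ≤ (s*c - p*q)*((c*q)^2 + (s*p)^2) :=
    mul_le_mul hS hD1 (by norm_num) (by nlinarith [pow_pos ht 3])
  nlinarith [pow_pos ht 3, mul_le_mul_of_nonneg_left hXY (by linarith : (0:ℝ) ≤ 3*t)]

lemma case_large (t s c p q : ℝ) (h3 : 3 < t)
    (hpyth : p^2 + q^2 = 1) (hpyth2 : c^2 = s^2 + 1) (hs0 : 0 < s)
    (hsl : 7.5 ≤ s) (hcs : s ≤ c) :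
    4*(s*p)^2 ≤ 3*t*(s*c - p*q)*((c*q)^2 + (s*p)^2) := by
  have hD : (c*q)^2 + (s*p)^2 = q^2 + s^2 := by nlinarith [hpyth, hpyth2]
  have hpq : p*q ≤ 1 := by nlinarith [sq_nonneg (p-q)]
  have hSbig : s^2 - 1 ≤ s*c - p*q := by
    have := mul_le_mul_of_nonneg_left hcs hs0.le
    nlinarith
  have hDbig : s^2 ≤ (c*q)^2 + (s*p)^2 := by rw [hD]; nlinarith [sq_nonneg q]
  have hp1 : p^2 ≤ 1 := by nlinarith [sq_nonneg q]
  have hLHS : 4*(s*p)^2 ≤ 4*s^2 := by nlinarith [sq_nonneg s, sq_nonneg p]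
  have h56 : (56.25:ℝ) ≤ s^2 := by nlinarith [sq_nonneg (s - 7.5)]
  have hSpos : (0:ℝ) ≤ s^2 - 1 := by linarith
  have hXY : (s^2-1)*s^2 ≤ (s*c - p*q)*((c*q)^2 + (s*p)^2) :=
    mul_le_mul hSbig hDbig (by positivity) (by linarith)
  have h9 : (9:ℝ) ≤ 3*t := by linarith
  have h1 : 9*((s^2-1)*s^2) ≤ (3*t)*((s*c - p*q)*((c*q)^2 + (s*p)^2)) :=
    mul_le_mul h9 hXY (by positivity) (by linarith)
  have h2 : 4*s^2 ≤ 9*((s^2-1)*s^2) := by nlinarith [h56, sq_nonneg s]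
  calc 4*(s*p)^2 ≤ 4*s^2 := hLHS
    _ ≤ 9*((s^2-1)*s^2) := h2
    _ ≤ (3*t)*((s*c - p*q)*((c*q)^2 + (s*p)^2)) := h1
    _ = 3*t*(s*c - p*q)*((c*q)^2 + (s*p)^2) := by ring

lemma key_ineq (t : ℝ) (ht : 0 < t) :
    4*(Real.sinh t*Real.sin t)^2 ≤
      3*t*(Real.sinh t*Real.cosh t - Real.sin t*Real.cos t) *
        ((Real.cosh t*Real.cos t)^2 + (Real.sinh t*Real.sin t)^2) := by
  have hpyth : Real.sin t^2 + Real.cos t^2 = 1 := Real.sin_sq_add_cos_sq t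
  have hpyth2 : Real.cosh t^2 = Real.sinh t^2 + 1 := Real.cosh_sq t
  have hs0 : 0 < Real.sinh t := Real.sinh_pos_iff.2 ht
  rcases le_or_gt t 3 with h3 | h3
  · have hp0 : 0 ≤ Real.sin t := Real.sin_nonneg_of_nonneg_of_le_pi ht.le
      (h3.trans (by linarith [Real.pi_gt_three]))
    have hB : Real.sinh t * Real.sin t ≤ t^2 := sinh_sin_le t ht.le h3
    have hsinle : Real.sin t ≤ t := Real.sin_le ht.le
    have hts : t ≤ Real.sinh t := Real.self_le_sinh_iff.2 ht.le
    have hS : 4*t^3/3 ≤ Real.sinh t * Real.cosh t - Real.sin t * Real.cos t := by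
      have := cube_lb (2*t) (by linarith)
      rw [Real.sinh_two_mul, Real.sin_two_mul] at this
      linarith
    exact case_small t _ _ _ _ ht hpyth hpyth2 hs0 hp0 hB hsinle hts hS
  · have ht3 : (27:ℝ) ≤ t^3 := by
      calc (27:ℝ) = 3^3 := by norm_num
      _ ≤ t^3 := pow_le_pow_left₀ (by norm_num) h3.le 3
    have hsl : (7.5:ℝ) ≤ Real.sinh t := by have := sinh_lb t ht.le; linarith
    have hcs : Real.sinh t ≤ Real.cosh t := by
      nlinarith [Real.cosh_pos (x := t), hpyth2]
    exact case_large t _ _ _ _ h3 hpyth hpyth2 hs0 hsl hcs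

open Real Complex in
lemma csqrt_eval (z x : ℝ) (hz : 0 < z) (hx : 0 < x) :
    csqrt (2 * (-Complex.I * (x:ℂ) / (z:ℂ)^2)) = (1 - Complex.I) * (Real.sqrt x : ℂ) / (z:ℂ) := by
  have hz0 : (z:ℂ) ≠ 0 := Complex.ofReal_ne_zero.2 hz.ne'
  set r : ℝ := 2*x/z^2 with hr
  have hrpos : 0 < r := by positivity
  have h2c : 2 * (-Complex.I * (x:ℂ) / (z:ℂ)^2) = (r:ℂ) * (-Complex.I) := by
    rw [hr]
    push_cast
    field_simp
  have hne : (r:ℂ) * (-Complex.I) ≠ 0 := by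
    simp [Complex.ofReal_ne_zero.2 hrpos.ne', Complex.I_ne_zero]
  have harg : Complex.arg ((r:ℂ) * (-Complex.I)) = -(π/2) := by
    rw [Complex.arg_real_mul _ hrpos, Complex.arg_neg_I]
  have habs : ‖(r:ℂ) * (-Complex.I)‖ = r := by
    simp [abs_of_pos hrpos]
  have hlog : Complex.log ((r:ℂ) * (-Complex.I)) = (Real.log r : ℂ) + (-(π/2) : ℝ) * Complex.I := by
    rw [Complex.log, habs, harg]
  rw [csqrt, h2c, Complex.cpow_def_of_ne_zero hne, hlog]
  have hmul : ((Real.log r : ℂ) + (-(π/2):ℝ) * Complex.I) * (1/2)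
      = (Real.log r / 2 : ℝ) + (-(π/4):ℝ) * Complex.I := by push_cast; ring
  rw [hmul, Complex.exp_add, ← Complex.ofReal_exp, Complex.exp_mul_I]
  have hexp : Real.exp (Real.log r / 2) = Real.sqrt 2 * Real.sqrt x / z := by
    have h1 : Real.sqrt r = Real.exp (Real.log r / 2) := by
      rw [Real.sqrt_eq_rpow, Real.rpow_def_of_pos hrpos]
      ring_nf
    have h2 : Real.sqrt r = Real.sqrt 2 * Real.sqrt x / z := by
      rw [hr, show 2*x/z^2 = (Real.sqrt 2 * Real.sqrt x / z)^2 by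
        rw [div_pow, mul_pow, Real.sq_sqrt (by norm_num : (0:ℝ) ≤ 2), Real.sq_sqrt hx.le],
        Real.sqrt_sq (by positivity)]
    rw [← h1, h2]
  rw [hexp]
  have hcos : Complex.cos ((-(π/4):ℝ)) = ((Real.sqrt 2 / 2 : ℝ) : ℂ) := by
    rw [← Complex.ofReal_cos]
    norm_num [Real.cos_pi_div_four]
  have hsin : Complex.sin ((-(π/4):ℝ)) = -((Real.sqrt 2 / 2 : ℝ) : ℂ) := by
    rw [← Complex.ofReal_sin]
    norm_num [Real.sin_pi_div_four]
  rw [hcos, hsin]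
  have h22 : (Real.sqrt 2 : ℂ) * (Real.sqrt 2 : ℂ) = 2 := by
    rw [← Complex.ofReal_mul, Real.mul_self_sqrt (by norm_num : (0:ℝ) ≤ 2)]
    norm_num
  push_cast
  field_simp
  ring_nf
  rw [show ((Real.sqrt 2:ℂ))^2 = 2 by rw [sq]; exact h22]
  ring

lemma cosh_eval (t : ℝ) : Complex.cosh ((1 - Complex.I) * (t:ℂ)) =
    ((Real.cosh t * Real.cos t : ℝ) : ℂ) - ((Real.sinh t * Real.sin t : ℝ) : ℂ) * Complex.I := by
  have h : (1 - Complex.I) * (t:ℂ) = (t:ℂ) - (t:ℂ) * Complex.I := by ring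
  rw [h, Complex.cosh_sub, Complex.cosh_mul_I, Complex.sinh_mul_I, ← Complex.ofReal_cosh,
    ← Complex.ofReal_sinh, ← Complex.ofReal_cos, ← Complex.ofReal_sin]
  push_cast
  ring

lemma sinh_eval (t : ℝ) : Complex.sinh ((1 - Complex.I) * (t:ℂ)) =
    ((Real.sinh t * Real.cos t : ℝ) : ℂ) - ((Real.cosh t * Real.sin t : ℝ) : ℂ) * Complex.I := by
  have h : (1 - Complex.I) * (t:ℂ) = (t:ℂ) - (t:ℂ) * Complex.I := by ring
  rw [h, Complex.sinh_sub, Complex.cosh_mul_I, Complex.sinh_mul_I, ← Complex.ofReal_cosh,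
    ← Complex.ofReal_sinh, ← Complex.ofReal_cos, ← Complex.ofReal_sin]
  push_cast
  ring

theorem S_im_sq_le_T_im (z x : ℝ) (hz : 0 < z) (hx : 0 < x)
    (c : ℂ) (hc : c = -Complex.I * (x : ℂ) / (z : ℂ) ^ 2) :
    (Sf z c).im ^ 2 ≤ (3 * x / (2 * z)) * (Tf z c).im := by
  have hz0 : (z:ℂ) ≠ 0 := Complex.ofReal_ne_zero.2 hz.ne'
  obtain ⟨t, htdef⟩ : ∃ t, Real.sqrt x = t := ⟨_, rfl⟩
  have ht : 0 < t := htdef ▸ Real.sqrt_pos.2 hx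
  have ht0 : (t:ℂ) ≠ 0 := Complex.ofReal_ne_zero.2 ht.ne'
  have hx2 : x = t^2 := by rw [← htdef, Real.sq_sqrt hx.le]
  have hDpos : 0 < (Real.cosh t * Real.cos t)^2 + (Real.sinh t * Real.sin t)^2 := by
    have h1 : (Real.cosh t * Real.cos t)^2 + (Real.sinh t * Real.sin t)^2
        = Real.cos t^2 + Real.sinh t^2 := by
      nlinarith [Real.sin_sq_add_cos_sq t, Real.cosh_sq t]
    have h2 : 0 < Real.sinh t := Real.sinh_pos_iff.2 ht
    nlinarith [sq_nonneg (Real.cos t)]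
  -- csqrt value
  have hq : csqrt (2 * c) = (1 - Complex.I) * (t:ℂ) / (z:ℂ) := by
    rw [hc, ← htdef]; exact csqrt_eval z x hz hx
  have hW : csqrt (2 * c) * (z:ℂ) = (1 - Complex.I) * (t:ℂ) := by
    rw [hq]; field_simp
  have hcosh : Complex.cosh (csqrt (2 * c) * (z:ℂ)) =
      ((Real.cosh t * Real.cos t : ℝ) : ℂ) - ((Real.sinh t * Real.sin t : ℝ) : ℂ) * Complex.I := by
    rw [hW, cosh_eval]
  have hcoshne : Complex.cosh (csqrt (2 * c) * (z:ℂ)) ≠ 0 := by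
    rw [hcosh]
    intro h
    rw [Complex.ext_iff] at h
    simp only [Complex.sub_re, Complex.sub_im, Complex.mul_re, Complex.mul_im,
      Complex.ofReal_re, Complex.ofReal_im, Complex.I_re, Complex.I_im,
      Complex.zero_re, Complex.zero_im] at h
    obtain ⟨h1, h2⟩ := h
    norm_num at h1 h2
    rcases h1 with h1 | h1
    · exact absurd h1 (Real.cosh_pos t).ne'
    · rcases h2 with h2 | h2
      · exact ht.ne' h2
      · nlinarith [Real.sin_sq_add_cos_sq t, h1, h2]
  -- Sf imaginary part
  have hSim : (Sf z c).im = Real.sinh t * Real.sin t /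
      ((Real.cosh t * Real.cos t)^2 + (Real.sinh t * Real.sin t)^2) := by
    rw [Sf, hcosh, one_div, Complex.inv_im, Complex.normSq_apply]
    simp only [Complex.sub_re, Complex.sub_im, Complex.mul_re, Complex.mul_im,
      Complex.ofReal_re, Complex.ofReal_im, Complex.I_re, Complex.I_im]
    ring
  -- c ≠ 0
  have hc0 : c ≠ 0 := by
    rw [hc]
    intro h
    have h2 : -Complex.I * (x:ℂ) = 0 := by
      field_simp at h
      simpa using h
    simp [Complex.I_ne_zero, Complex.ofReal_ne_zero.2 hx.ne'] at h2
  -- Tf value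
  have hcoshW : Complex.cosh ((1 - Complex.I) * (t:ℂ)) ≠ 0 := hW ▸ hcoshne
  have hcoshexp : (((Real.cosh t * Real.cos t : ℝ) : ℂ)
      - ((Real.sinh t * Real.sin t : ℝ) : ℂ) * Complex.I) ≠ 0 := cosh_eval t ▸ hcoshW
  have h1I : (1 - Complex.I) ≠ 0 := by
    intro h
    have := congrArg Complex.im h
    simp at this
  have hTf : Tf z c =
      (((Real.sinh t * Real.cos t * z : ℝ) : ℂ) +
        ((-(Real.cosh t * Real.sin t * z) : ℝ) : ℂ) * Complex.I) /
      (((t * (Real.cosh t * Real.cos t - Real.sinh t * Real.sin t) : ℝ) : ℂ) +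
        ((-(t * (Real.cosh t * Real.cos t + Real.sinh t * Real.sin t)) : ℝ) : ℂ) * Complex.I) := by
    rw [Tf, if_neg hc0, Complex.tanh_eq_sinh_div_cosh, hW, hq, sinh_eval, cosh_eval]
    have hDENeq : (((t * (Real.cosh t * Real.cos t - Real.sinh t * Real.sin t) : ℝ) : ℂ) +
        ((-(t * (Real.cosh t * Real.cos t + Real.sinh t * Real.sin t)) : ℝ) : ℂ) * Complex.I)
        = (((Real.cosh t * Real.cos t : ℝ) : ℂ)
          - ((Real.sinh t * Real.sin t : ℝ) : ℂ) * Complex.I) * ((1 - Complex.I) * (t:ℂ)) := by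
      push_cast
      linear_combination (-(t:ℂ) * Complex.sinh (t:ℂ) * Complex.sin (t:ℂ)) * Complex.I_sq
    have hNUMeq : (((Real.sinh t * Real.cos t * z : ℝ) : ℂ) +
        ((-(Real.cosh t * Real.sin t * z) : ℝ) : ℂ) * Complex.I)
        = (((Real.sinh t * Real.cos t : ℝ) : ℂ)
          - ((Real.cosh t * Real.sin t : ℝ) : ℂ) * Complex.I) * (z:ℂ) := by
      push_cast; ring
    rw [hDENeq, hNUMeq, div_eq_div_iff]
    · generalize ((Real.cosh t * Real.cos t : ℝ) : ℂ) - ((Real.sinh t * Real.sin t : ℝ) : ℂ) * Complex.I = C at hcoshexp ⊢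
      field_simp [hcoshexp]
    · exact div_ne_zero (mul_ne_zero h1I ht0) hz0
    · exact mul_ne_zero hcoshexp (mul_ne_zero h1I ht0)
  have him_div : ∀ a b cc d : ℝ, (((a:ℂ) + (b:ℂ)*Complex.I)/((cc:ℂ) + (d:ℂ)*Complex.I)).im
      = (b*cc - a*d)/(cc^2+d^2) := by
    intro a b cc d
    rw [Complex.div_im, Complex.normSq_apply]
    simp only [Complex.add_re, Complex.add_im, Complex.mul_re, Complex.mul_im,
      Complex.ofReal_re, Complex.ofReal_im, Complex.I_re, Complex.I_im]
    ring_nf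
  have hden : (t * (Real.cosh t * Real.cos t - Real.sinh t * Real.sin t))^2 +
      (-(t * (Real.cosh t * Real.cos t + Real.sinh t * Real.sin t)))^2 ≠ 0 := by
    have := mul_pos (mul_pos ht ht) hDpos
    nlinarith [this]
  have hTim : (Tf z c).im = z * (Real.sinh t * Real.cosh t - Real.sin t * Real.cos t) /
      (2 * t * ((Real.cosh t * Real.cos t)^2 + (Real.sinh t * Real.sin t)^2)) := by
    rw [hTf, him_div, div_eq_div_iff hden (by positivity)]
    linear_combination (2*t^2*((Real.cosh t*Real.cos t)^2 + (Real.sinh t*Real.sin t)^2)*z*(Real.sinh t*Real.cosh t)) * (Real.sin_sq_add_cos_sq t) - (2*t^2*((Real.cosh t*Real.cos t)^2 + (Real.sinh t*Real.sin t)^2)*z*(Real.sin t*Real.cos t)) * (Real.cosh_sq_sub_sinh_sq t)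
  rw [hSim, hTim, hx2]
  have hkey := key_ineq t ht
  have hrw : 3 * t^2 / (2*z) * (z * (Real.sinh t * Real.cosh t - Real.sin t * Real.cos t) /
      (2 * t * ((Real.cosh t * Real.cos t)^2 + (Real.sinh t * Real.sin t)^2)))
      = 3*t*(Real.sinh t * Real.cosh t - Real.sin t * Real.cos t) /
        (4*((Real.cosh t * Real.cos t)^2 + (Real.sinh t * Real.sin t)^2)) := by
    field_simp
    ring
  rw [hrw, div_pow, div_le_div_iff₀ (by positivity) (by positivity)]
  nlinarith [mul_le_mul_of_nonneg_right hkey hDpos.le]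
end

section
/- Let W > 0 and let u : ℝ → ℂ be a continuous function vanishing outside a compact interval, with Fourier transform û(ν) = ∫_ℝ u(t)·e^{−2πi·ν·t} dt. Then ∫_{−W/2}^{W/2} |û(ν)|² dν ≤ ∫_ℝ ∫_ℝ u(t)·conj(u(t'))·b(t−t') dt' dt, where b(τ) = 2·W·sinc(W·τ)² and the double integral is a real number. -/
open MeasureTheory

/-- Normalized sinc function. -/
noncomputable def nsinc (y : ℝ) : ℝ := if y = 0 then 1 else Real.sin (Real.pi * y) / (Real.pi * y)

noncomputable def btil (W f : ℝ) : ℝ := 2 * max (1 - |f| / W) 0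

noncomputable def e2 (x : ℝ) : ℂ := Complex.exp (2 * Real.pi * Complex.I * x)

section helpers
open Real intervalIntegral

lemma btil_cont (W : ℝ) : Continuous (btil W) := by
  unfold btil; fun_prop

lemma e2_cont : Continuous e2 := by
  unfold e2; fun_prop

lemma btil_nonneg (W f : ℝ) : 0 ≤ btil W f :=
  mul_nonneg (by norm_num) (le_max_right _ _)

lemma btil_eq_zero {W f : ℝ} (hW : 0 < W) (hf : W ≤ |f|) : btil W f = 0 := by
  have h1 : 1 - |f| / W ≤ 0 := by
    have := (one_le_div hW).mpr hf
    linarith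
  simp [btil, max_eq_right h1]

lemma btil_even (W f : ℝ) : btil W (-f) = btil W f := by simp [btil]

lemma btil_ge_one {W f : ℝ} (hW : 0 < W) (hf : |f| ≤ W / 2) : 1 ≤ btil W f := by
  have h1 : |f| / W ≤ 1 / 2 := by
    rw [div_le_div_iff₀ hW (by norm_num)]; linarith
  have h2 : (1:ℝ)/2 ≤ max (1 - |f| / W) 0 := le_max_of_le_left (by linarith)
  unfold btil; linarith

lemma hasDerivAt_aux (c : ℝ) (p q : ℂ) (x : ℝ) :
    HasDerivAt (fun f : ℝ => Complex.exp (Complex.I * c * f) * (p + q * f))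
      (Complex.exp (Complex.I * c * x) * ((Complex.I * c * p + q) + Complex.I * c * q * x)) x := by
  have hlin : HasDerivAt (fun f : ℝ => Complex.I * (c:ℂ) * (f:ℂ)) (Complex.I * c) x := by
    simpa using (Complex.ofRealCLM.hasDerivAt (x := x)).const_mul (Complex.I * c)
  have h1 : HasDerivAt (fun f : ℝ => Complex.exp (Complex.I * c * f))
      (Complex.exp (Complex.I * c * x) * (Complex.I * c)) x :=
    (Complex.hasDerivAt_exp _).comp x hlin
  have h2 : HasDerivAt (fun f : ℝ => p + q * (f:ℂ)) q x := by
    simpa using ((Complex.ofRealCLM.hasDerivAt (x := x)).const_mul q).const_add p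
  have := h1.mul h2
  refine this.congr_deriv ?_
  ring

lemma contR2C {g : ℝ → ℝ} (h : Continuous g) : Continuous fun x => ((g x : ℝ) : ℂ) :=
  Complex.continuous_ofReal.comp h

lemma btil_on_Icc {W f : ℝ} (hW : 0 < W) (h0 : 0 ≤ f) (h1 : f ≤ W) :
    btil W f = 2 * (1 - f / W) := by
  have ha : |f| = f := abs_of_nonneg h0
  have h2 : 0 ≤ 1 - |f| / W := by
    rw [ha, sub_nonneg, div_le_one hW]; exact h1
  rw [btil, max_eq_left h2, ha]

lemma kernel (W : ℝ) (hW : 0 < W) (τ : ℝ) :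
    ∫ f : ℝ, (btil W f : ℂ) * e2 (f * τ) = ((2 * W * nsinc (W * τ) ^ 2 : ℝ) : ℂ) := by
  have hWne : W ≠ 0 := ne_of_gt hW
  have hzero : ∀ f : ℝ, f ∉ Set.Ioc (-W) W → (btil W f : ℂ) * e2 (f * τ) = 0 := by
    intro f hf
    have : W ≤ |f| := by
      rcases abs_cases f with ⟨h1, h2⟩ | ⟨h1, h2⟩ <;>
        · simp only [Set.mem_Ioc, not_and_or, not_lt, not_le] at hf
          rcases hf with h | h <;> [linarith; linarith]
    rw [btil_eq_zero hW this]; simp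
  rw [← setIntegral_eq_integral_of_forall_compl_eq_zero hzero,
    ← intervalIntegral.integral_of_le (by linarith : -W ≤ W)]
  have hint : ∀ a b : ℝ, IntervalIntegrable (fun f => (btil W f : ℂ) * e2 (f * τ)) volume a b := by
    intro a b
    apply Continuous.intervalIntegrable
    exact (contR2C (btil_cont W)).mul (e2_cont.comp (by fun_prop))
  rw [← intervalIntegral.integral_add_adjacent_intervals (b := 0) (hint _ _) (hint _ _)]
  obtain ⟨c, hc⟩ : ∃ c : ℝ, c = 2 * Real.pi * τ := ⟨_, rfl⟩
  -- split into cos and sin parts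
  have hptwise : ∀ f : ℝ, (btil W f : ℂ) * e2 (f * τ)
      = ((btil W f * Real.cos (c * f) : ℝ) : ℂ)
        + ((btil W f * Real.sin (c * f) : ℝ) : ℂ) * Complex.I := by
    intro f
    have he : e2 (f * τ) = Complex.exp ((c * f : ℝ) * Complex.I) := by
      unfold e2; congr 1; rw [hc]; push_cast; ring
    rw [he, Complex.exp_mul_I, ← Complex.ofReal_cos, ← Complex.ofReal_sin]
    push_cast
    ring
  have hcosC : Continuous fun f => btil W f * Real.cos (c * f) :=
    (btil_cont W).mul (by fun_prop)
  have hsinC : Continuous fun f => btil W f * Real.sin (c * f) :=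
    (btil_cont W).mul (by fun_prop)
  have hsplit : ∀ a b : ℝ, (∫ f in a..b, (btil W f : ℂ) * e2 (f * τ))
      = ((∫ f in a..b, btil W f * Real.cos (c * f)) : ℝ)
        + ((∫ f in a..b, btil W f * Real.sin (c * f)) : ℝ) * Complex.I := by
    intro a b
    simp_rw [hptwise]
    rw [intervalIntegral.integral_add ((contR2C hcosC).intervalIntegrable _ _)
        (g := fun f => ((btil W f * Real.sin (c * f) : ℝ) : ℂ) * Complex.I)
        (((contR2C hsinC).mul continuous_const).intervalIntegrable _ _),
      intervalIntegral.integral_mul_const,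
      intervalIntegral.integral_ofReal, intervalIntegral.integral_ofReal]
  -- odd/even reduction
  have hodd : (∫ f in (-W)..(0:ℝ), btil W f * Real.sin (c * f))
      = - ∫ f in (0:ℝ)..W, btil W f * Real.sin (c * f) := by
    have h := intervalIntegral.integral_comp_neg (a := (0:ℝ)) (b := W)
      (fun f => btil W f * Real.sin (c * f))
    rw [neg_zero] at h
    rw [← h, ← intervalIntegral.integral_neg]
    apply intervalIntegral.integral_congr
    intro x _
    simp [btil_even, mul_neg, Real.sin_neg]
  have heven : (∫ f in (-W)..(0:ℝ), btil W f * Real.cos (c * f))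
      = ∫ f in (0:ℝ)..W, btil W f * Real.cos (c * f) := by
    have h := intervalIntegral.integral_comp_neg (a := (0:ℝ)) (b := W)
      (fun f => btil W f * Real.cos (c * f))
    rw [neg_zero] at h
    rw [← h]
    apply intervalIntegral.integral_congr
    intro x _
    simp [btil_even, mul_neg, Real.cos_neg]
  rw [hsplit, hsplit, hodd, heven]
  have hcongr : (∫ f in (0:ℝ)..W, btil W f * Real.cos (c * f))
      = ∫ f in (0:ℝ)..W, 2 * (1 - f / W) * Real.cos (c * f) := by
    apply intervalIntegral.integral_congr
    intro f hf
    rw [Set.uIcc_of_le hW.le] at hf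
    dsimp only
    rw [btil_on_Icc hW hf.1 hf.2]
  rw [hcongr]
  have hval : (∫ f in (0:ℝ)..W, 2 * (1 - f / W) * Real.cos (c * f))
      = W * nsinc (W * τ) ^ 2 := by
    rcases eq_or_ne τ 0 with hτ | hτ
    · have hc0 : c = 0 := by rw [hc, hτ]; ring
      have hn : nsinc (W * τ) = 1 := by rw [hτ]; simp [nsinc]
      simp only [hc0, zero_mul, Real.cos_zero, mul_one, hn, one_pow]
      have hpt : ∀ f : ℝ, 2 * (1 - f / W) = 2 + (-2 / W) * f := by
        intro f; field_simp; ring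
      simp_rw [hpt]
      rw [intervalIntegral.integral_add (intervalIntegrable_const)
          (((by fun_prop : Continuous fun f : ℝ => -2 / W * f)).intervalIntegrable _ _),
        intervalIntegral.integral_const, intervalIntegral.integral_const_mul, integral_id]
      field_simp
      ring
    · have hcne : c ≠ 0 := by
        rw [hc]; exact mul_ne_zero (mul_ne_zero two_ne_zero Real.pi_ne_zero) hτ
      have hderiv : ∀ x ∈ Set.uIcc (0:ℝ) W,
          HasDerivAt (fun f => 2 * (1 - f / W) * Real.sin (c * f) / c
              - 2 * Real.cos (c * f) / (c ^ 2 * W))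
            (2 * (1 - x / W) * Real.cos (c * x)) x := by
        intro x _
        have hlin : HasDerivAt (fun y : ℝ => c * y) c x := by
          simpa using (hasDerivAt_id x).const_mul c
        have hsin : HasDerivAt (fun f : ℝ => Real.sin (c * f)) (Real.cos (c * x) * c) x :=
          (Real.hasDerivAt_sin (c * x)).comp x hlin
        have hcos : HasDerivAt (fun f : ℝ => Real.cos (c * f)) (-Real.sin (c * x) * c) x :=
          (Real.hasDerivAt_cos (c * x)).comp x hlin
        have hpoly : HasDerivAt (fun f : ℝ => 2 * (1 - f / W)) (2 * (0 - 1 / W)) x :=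
          ((hasDerivAt_const x (1:ℝ)).sub ((hasDerivAt_id x).div_const W)).const_mul 2
        have H := ((hpoly.mul hsin).div_const c).sub ((hcos.const_mul 2).div_const (c ^ 2 * W))
        refine H.congr_deriv ?_
        field_simp
        ring
      rw [intervalIntegral.integral_eq_sub_of_hasDerivAt hderiv
        (((continuous_const.mul (continuous_const.sub (continuous_id.div_const W))).mul
          (by fun_prop)).intervalIntegrable _ _)]
      have hn : nsinc (W * τ) = Real.sin (Real.pi * (W * τ)) / (Real.pi * (W * τ)) := by
        rw [nsinc, if_neg (mul_ne_zero hWne hτ)]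
      have hcos2 : Real.cos (c * W) = 2 * Real.cos (Real.pi * (W * τ)) ^ 2 - 1 := by
        rw [← Real.cos_two_mul]; congr 1; rw [hc]; ring
      have hsin2 : Real.sin (Real.pi * (W * τ)) ^ 2 = 1 - Real.cos (Real.pi * (W * τ)) ^ 2 := by
        have := Real.sin_sq_add_cos_sq (Real.pi * (W * τ)); linarith
      rw [hn, div_pow, hsin2]
      simp only [Real.sin_zero, Real.cos_zero, mul_zero, zero_div, mul_one, zero_mul]
      rw [hcos2]
      subst hc
      have hπ : (Real.pi : ℝ) ≠ 0 := Real.pi_ne_zero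
      field_simp
      ring
  rw [hval]
  push_cast
  ring


lemma btil_eq_zero' {W f : ℝ} (hW : 0 < W) (hf : f ∉ Set.Icc (-W) W) : btil W f = 0 := by
  apply btil_eq_zero hW
  simp only [Set.mem_Icc, not_and_or, not_le] at hf
  rcases hf with h | h
  · rw [abs_of_nonpos (by linarith)]; linarith
  · rw [abs_of_nonneg (by linarith)]; linarith

lemma e2_add (x y : ℝ) : e2 (x + y) = e2 x * e2 y := by
  unfold e2; rw [← Complex.exp_add]; congr 1; push_cast; ring

lemma e2_conj (x : ℝ) : (starRingEnd ℂ) (e2 x) = e2 (-x) := by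
  unfold e2
  rw [← Complex.exp_conj]
  congr 1
  simp only [map_mul, Complex.conj_I, Complex.conj_ofReal, map_ofNat]
  push_cast
  ring


theorem bpb_key (W : ℝ) (hW : 0 < W)
    (u : ℝ → ℂ) (hu : Continuous u) (hsupp : HasCompactSupport u)
    (uhat : ℝ → ℂ) (huc : Continuous uhat)
    (huhat' : ∀ ν : ℝ, uhat ν = ∫ t : ℝ, u t * e2 (-(ν * t))) :
    (∫ t : ℝ, ∫ t' : ℝ,
        u t * (starRingEnd ℂ) (u t') * ((2 * W * nsinc (W * (t - t')) ^ 2 : ℝ) : ℂ))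
      = ((∫ f : ℝ, btil W f * ‖uhat f‖ ^ 2 : ℝ) : ℂ) := by
  have hcu : Continuous fun t => (starRingEnd ℂ) (u t) := (RCLike.continuous_conj (K := ℂ)).comp hu
  have hbC : Continuous fun f => ((btil W f : ℝ) : ℂ) := Complex.continuous_ofReal.comp (btil_cont W)
  -- step 1 : rewrite the kernel
  have step1 : (∫ t : ℝ, ∫ t' : ℝ,
        u t * (starRingEnd ℂ) (u t') * ((2 * W * nsinc (W * (t - t')) ^ 2 : ℝ) : ℂ))
      = ∫ t : ℝ, ∫ t' : ℝ, u t * (starRingEnd ℂ) (u t')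
          * ∫ f : ℝ, (btil W f : ℂ) * e2 (f * (t - t')) := by
    simp_rw [kernel W hW]
  -- the `t'` integral for fixed t
  have inner1 : ∀ t : ℝ, (∫ t' : ℝ, u t * (starRingEnd ℂ) (u t')
          * ∫ f : ℝ, (btil W f : ℂ) * e2 (f * (t - t')))
      = u t * ∫ f : ℝ, ((btil W f : ℂ) * (starRingEnd ℂ) (uhat (-f))) * e2 (f * t) := by
    intro t
    simp_rw [mul_assoc, MeasureTheory.integral_const_mul]
    congr 1
    have hpull : ∀ t' : ℝ, (starRingEnd ℂ) (u t') * ∫ f : ℝ, (btil W f : ℂ) * e2 (f * (t - t'))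
        = ∫ f : ℝ, (starRingEnd ℂ) (u t') * ((btil W f : ℂ) * e2 (f * (t - t'))) := by
      intro t'
      rw [MeasureTheory.integral_const_mul]
    simp_rw [hpull]
    rw [integral_integral_swap_of_hasCompactSupport]
    · congr 1
      funext f
      have h1 : ∀ t' : ℝ, (starRingEnd ℂ) (u t') * ((btil W f : ℂ) * e2 (f * (t - t')))
          = ((btil W f : ℂ) * e2 (f * t)) * ((starRingEnd ℂ) (u t') * e2 (-(f * t'))) := by
        intro t'
        rw [show f * (t - t') = f * t + -(f * t') by ring, e2_add]
        ring
      simp_rw [h1]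
      rw [MeasureTheory.integral_const_mul]
      have h2 : (∫ t' : ℝ, (starRingEnd ℂ) (u t') * e2 (-(f * t')))
          = (starRingEnd ℂ) (uhat (-f)) := by
        rw [huhat' (-f), ← integral_conj]
        congr 1
        funext t'
        rw [map_mul, e2_conj]
        congr 2
        ring
      rw [h2]
      ring
    · -- continuity
      apply Continuous.mul
      · exact hcu.comp continuous_fst
      · exact (hbC.comp continuous_snd).mul
          (e2_cont.comp ((continuous_snd.mul (continuous_const.sub continuous_fst))))
    · -- compact support
      apply HasCompactSupport.intro (hsupp.prod (isCompact_Icc (a := -W) (b := W)))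
      intro p hp
      rcases not_and_or.mp (fun h => hp (Set.mk_mem_prod h.1 h.2)) with h | h
      · simp [Function.uncurry, image_eq_zero_of_notMem_tsupport h]
      · simp [Function.uncurry, btil_eq_zero' hW h]
  rw [step1]
  have step2 : (∫ t : ℝ, ∫ t' : ℝ, u t * (starRingEnd ℂ) (u t')
          * ∫ f : ℝ, (btil W f : ℂ) * e2 (f * (t - t')))
      = ∫ t : ℝ, u t * ∫ f : ℝ, ((btil W f : ℂ) * (starRingEnd ℂ) (uhat (-f))) * e2 (f * t) :=
    integral_congr_ae (Filter.Eventually.of_forall inner1)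
  rw [step2]
  have hpull2 : ∀ t : ℝ, u t * (∫ f : ℝ, ((btil W f : ℂ) * (starRingEnd ℂ) (uhat (-f))) * e2 (f * t))
      = ∫ f : ℝ, u t * (((btil W f : ℂ) * (starRingEnd ℂ) (uhat (-f))) * e2 (f * t)) := by
    intro t
    rw [MeasureTheory.integral_const_mul]
  simp_rw [hpull2]
  rw [integral_integral_swap_of_hasCompactSupport]
  · have inner3 : ∀ f : ℝ, (∫ t : ℝ, u t * (((btil W f : ℂ) * (starRingEnd ℂ) (uhat (-f))) * e2 (f * t)))
        = ((btil W f * ‖uhat (-f)‖ ^ 2 : ℝ) : ℂ) := by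
      intro f
      have h1 : ∀ t : ℝ, u t * (((btil W f : ℂ) * (starRingEnd ℂ) (uhat (-f))) * e2 (f * t))
          = ((btil W f : ℂ) * (starRingEnd ℂ) (uhat (-f))) * (u t * e2 (-(-f * t))) := by
        intro t
        ring_nf
      simp_rw [h1]
      rw [MeasureTheory.integral_const_mul, ← huhat' (-f)]
      rw [mul_assoc, mul_comm ((starRingEnd ℂ) (uhat (-f))) (uhat (-f)), Complex.mul_conj]
      rw [Complex.normSq_eq_norm_sq]
      push_cast
      ring
    simp_rw [inner3]
    have hOR : ∀ g : ℝ → ℝ, (∫ x : ℝ, ((g x : ℝ) : ℂ)) = ((∫ x : ℝ, g x : ℝ) : ℂ) :=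
      fun g => integral_ofReal
    rw [hOR fun f => btil W f * ‖uhat (-f)‖ ^ 2]
    norm_cast
    have : (fun f : ℝ => btil W f * ‖uhat (-f)‖ ^ 2)
        = fun f : ℝ => (fun g : ℝ => btil W g * ‖uhat g‖ ^ 2) (-f) := by
      funext f
      simp only
      rw [btil_even]
    rw [this]
    exact integral_neg_eq_self (fun g : ℝ => btil W g * ‖uhat g‖ ^ 2) _
  · apply Continuous.mul
    · exact hu.comp continuous_fst
    · exact (((hbC.comp continuous_snd).mul
        (((RCLike.continuous_conj (K := ℂ)).comp (huc.comp continuous_neg)).comp continuous_snd)).mul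
        (e2_cont.comp (continuous_snd.mul continuous_fst)))
  · apply HasCompactSupport.intro (hsupp.prod (isCompact_Icc (a := -W) (b := W)))
    intro p hp
    rcases not_and_or.mp (fun h => hp (Set.mk_mem_prod h.1 h.2)) with h | h
    · simp [Function.uncurry, image_eq_zero_of_notMem_tsupport h]
    · simp [Function.uncurry, btil_eq_zero' hW h]


end helpers

theorem bandlimited_power_bound (W : ℝ) (hW : 0 < W)
    (u : ℝ → ℂ) (hu : Continuous u) (hsupp : HasCompactSupport u)
    (uhat : ℝ → ℂ)
    (huhat : ∀ ν : ℝ, uhat ν =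
      ∫ t : ℝ, u t * Complex.exp (-2 * Real.pi * Complex.I * (ν : ℂ) * (t : ℂ))) :
    (∫ t : ℝ, ∫ t' : ℝ,
        u t * (starRingEnd ℂ) (u t') * ((2 * W * nsinc (W * (t - t')) ^ 2 : ℝ) : ℂ)).im = 0 ∧
    (∫ ν in (-(W / 2))..(W / 2), ‖uhat ν‖ ^ 2) ≤
      (∫ t : ℝ, ∫ t' : ℝ,
        u t * (starRingEnd ℂ) (u t') * ((2 * W * nsinc (W * (t - t')) ^ 2 : ℝ) : ℂ)).re := by
  have hWne : W ≠ 0 := ne_of_gt hW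
  have huInt : Integrable u := hu.integrable_of_hasCompactSupport hsupp
  -- uhat in e2 form
  have huhat' : ∀ ν : ℝ, uhat ν = ∫ t : ℝ, u t * e2 (-(ν * t)) := by
    intro ν
    rw [huhat]
    congr 1
    funext t
    congr 1
    unfold e2
    congr 1
    push_cast
    ring
  -- continuity of uhat
  have huc : Continuous uhat := by
    have heq : uhat = fun ν => FourierTransform.fourier u ν := by
      funext ν
      rw [Real.fourier_real_eq_integral_exp_smul, huhat ν]
      congr 1
      funext t
      rw [smul_eq_mul, mul_comm]
      congr 1
      push_cast
      ring_nf
    rw [heq]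
    exact VectorFourier.fourierIntegral_continuous Real.continuous_fourierChar
      (innerSL ℝ).continuous₂ huInt
  -- key identity
  have key : (∫ t : ℝ, ∫ t' : ℝ,
        u t * (starRingEnd ℂ) (u t') * ((2 * W * nsinc (W * (t - t')) ^ 2 : ℝ) : ℂ))
      = ((∫ f : ℝ, btil W f * ‖uhat f‖ ^ 2 : ℝ) : ℂ) :=
    bpb_key W hW u hu hsupp uhat huc huhat'
  constructor
  · rw [key]; exact Complex.ofReal_im _
  · rw [key, Complex.ofReal_re]
    -- final inequality
    have hPc : Continuous fun f => btil W f * ‖uhat f‖ ^ 2 :=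
      (btil_cont W).mul (by fun_prop)
    have hPint : Integrable fun f => btil W f * ‖uhat f‖ ^ 2 := by
      apply hPc.integrable_of_hasCompactSupport
      apply HasCompactSupport.intro (isCompact_Icc (a := -W) (b := W))
      intro f hf
      have : W ≤ |f| := by
        simp only [Set.mem_Icc, not_and_or, not_le] at hf
        rcases hf with h | h <;> [rw [abs_of_nonpos (by linarith)]; rw [abs_of_nonneg (by linarith)]]
        <;> linarith
      rw [btil_eq_zero hW this, zero_mul]
    rw [intervalIntegral.integral_of_le (by linarith : -(W/2) ≤ W/2)]
    calc ∫ ν in Set.Ioc (-(W/2)) (W/2), ‖uhat ν‖ ^ 2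
        ≤ ∫ ν in Set.Ioc (-(W/2)) (W/2), btil W ν * ‖uhat ν‖ ^ 2 := by
          apply setIntegral_mono_on
          · exact (Continuous.integrableOn_Ioc (by fun_prop))
          · exact hPint.integrableOn
          · exact measurableSet_Ioc
          · intro x hx
            have hxabs : |x| ≤ W / 2 := by
              rw [abs_le]; exact ⟨le_of_lt hx.1, hx.2⟩
            exact le_mul_of_one_le_left (by positivity) (btil_ge_one hW hxabs)
      _ ≤ ∫ ν : ℝ, btil W ν * ‖uhat ν‖ ^ 2 := by
          apply setIntegral_le_integral hPint
          filter_upwards with x using mul_nonneg (btil_nonneg W x) (by positivity)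
end

section
/- Let a, b ∈ ℂ and z > 0. Then the limit as c → 0 through nonzero complex values of (a²/2 − b²/(4c))·T(c) + (a·b/(2c))·(1 − S(c)) + (b²/(4c))·z exists and equals (z/2)·(a² + a·b·z + (b²/3)·z²). -/
open Filter Topology

/-- Third-order Taylor remainder of `exp`. -/
noncomputable def Rr (u : ℂ) : ℂ := Complex.exp u - (1 + u + u ^ 2 / 2 + u ^ 3 / 6)

lemma sum_range_four (u : ℂ) :
    ∑ m ∈ Finset.range 4, u ^ m / m.factorial = 1 + u + u ^ 2 / 2 + u ^ 3 / 6 := by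
  simp [Finset.sum_range_succ, Nat.factorial]

lemma hRr : Tendsto (fun u : ℂ => Rr u / u ^ 3) (𝓝[≠] 0) (𝓝 0) := by
  apply squeeze_zero_norm' (a := fun u : ℂ => ‖u‖ * (5 * (24 * 4 : ℝ)⁻¹))
  · filter_upwards [self_mem_nhdsWithin,
      nhdsWithin_le_nhds (Metric.closedBall_mem_nhds (0 : ℂ) one_pos)] with u hu hu1
    have hu0 : u ≠ 0 := hu
    have habs : ‖u‖ ≤ 1 := by
      simpa [dist_zero_right] using hu1
    have hb := Complex.exp_bound habs (n := 4) (by norm_num)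
    rw [sum_range_four] at hb
    have hbn : ‖Rr u‖ ≤ ‖u‖ ^ 4 * (5 * (24 * 4 : ℝ)⁻¹) := by
      simpa [Rr, Nat.factorial] using hb
    rw [norm_div, norm_pow, div_le_iff₀ (pow_pos (norm_pos_iff.mpr hu0) 3)]
    calc ‖Rr u‖ ≤ ‖u‖ ^ 4 * (5 * (24 * 4 : ℝ)⁻¹) := hbn
      _ = ‖u‖ * (5 * (24 * 4 : ℝ)⁻¹) * ‖u‖ ^ 3 := by ring
  · have h : Tendsto (fun u : ℂ => ‖u‖) (𝓝[≠] 0) (𝓝 0) := by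
      simpa using (continuous_norm.tendsto (0 : ℂ)).mono_left nhdsWithin_le_nhds
    simpa using h.mul_const (5 * (24 * 4 : ℝ)⁻¹)

set_option maxHeartbeats 1000000 in
theorem mecozzi_exponent_limit (a b : ℂ) (z : ℝ) (hz : 0 < z) :
    Filter.Tendsto
      (fun c : ℂ => (a ^ 2 / 2 - b ^ 2 / (4 * c)) * Tf z c
        + (a * b / (2 * c)) * (1 - Sf z c) + (b ^ 2 / (4 * c)) * (z : ℂ))
      (nhdsWithin 0 {(0 : ℂ)}ᶜ)
      (nhds (((z : ℂ) / 2) * (a ^ 2 + a * b * (z : ℂ) + (b ^ 2 / 3) * (z : ℂ) ^ 2))) := by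
  have hz0 : (z : ℂ) ≠ 0 := by exact_mod_cast hz.ne'
  -- substitution map
  have hmulz : Tendsto (fun w : ℂ => w * (z : ℂ)) (𝓝[≠] 0) (𝓝[≠] 0) := by
    apply tendsto_nhdsWithin_of_tendsto_nhds_of_eventually_within
    · simpa using ((continuous_mul_const (z : ℂ)).tendsto (0 : ℂ)).mono_left
        nhdsWithin_le_nhds
    · filter_upwards [self_mem_nhdsWithin] with w hw
      exact mul_ne_zero hw hz0
  have hf1 : Tendsto (fun w : ℂ => Rr (w * (z : ℂ)) / w ^ 3) (𝓝[≠] 0) (𝓝 0) := by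
    have h := (hRr.comp hmulz).mul_const ((z : ℂ) ^ 3)
    rw [zero_mul] at h
    refine h.congr' ?_
    filter_upwards [self_mem_nhdsWithin] with w hw
    have hw0 : w ≠ 0 := hw
    simp only [Function.comp_apply]
    rw [mul_pow]
    field_simp
  have hf2 : Tendsto (fun w : ℂ => Rr (-(w * (z : ℂ))) / w ^ 3) (𝓝[≠] 0) (𝓝 0) := by
    have hneg : Tendsto (fun w : ℂ => -w) (𝓝[≠] 0) (𝓝[≠] 0) := by
      apply tendsto_nhdsWithin_of_tendsto_nhds_of_eventually_within
      · simpa using (continuous_neg.tendsto (0 : ℂ)).mono_left nhdsWithin_le_nhds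
      · filter_upwards [self_mem_nhdsWithin] with w hw
        exact neg_ne_zero.mpr hw
    have h := (hf1.comp hneg).neg
    rw [neg_zero] at h
    refine h.congr' ?_
    filter_upwards [] with w
    simp [Function.comp]
    ring
  -- φ : (sinh(wz)/w - z)/w² → z³/6
  have hphi : Tendsto (fun w : ℂ => (Complex.sinh (w * (z : ℂ)) / w - (z : ℂ)) / w ^ 2)
      (𝓝[≠] 0) (𝓝 ((z : ℂ) ^ 3 / 6)) := by
    have h := tendsto_const_nhds (x := ((z : ℂ) ^ 3 / 6)) (f := 𝓝[≠] (0:ℂ)) |>.add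
      (((hf1.sub hf2).div_const 2))
    rw [show (0 - 0 : ℂ) / 2 = 0 by norm_num, add_zero] at h
    refine h.congr' ?_
    filter_upwards [self_mem_nhdsWithin] with w hw
    have hw0 : w ≠ 0 := hw
    show (z:ℂ)^3/6 + (Rr (w * z) / w ^ 3 - Rr (-(w * z)) / w ^ 3) / 2 = _
    simp only [Rr, Complex.sinh]
    field_simp [hw0]
    ring
  -- ψ : (cosh(wz) - 1)/w² → z²/2
  have hpsi : Tendsto (fun w : ℂ => (Complex.cosh (w * (z : ℂ)) - 1) / w ^ 2)
      (𝓝[≠] 0) (𝓝 ((z : ℂ) ^ 2 / 2)) := by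
    have hid : Tendsto (fun w : ℂ => w) (𝓝[≠] 0) (𝓝 0) :=
      (continuous_id.tendsto (0 : ℂ)).mono_left nhdsWithin_le_nhds
    have h := tendsto_const_nhds (x := ((z : ℂ) ^ 2 / 2)) (f := 𝓝[≠] (0:ℂ)) |>.add
      ((hid.mul ((hf1.add hf2).div_const 2)))
    rw [show (0:ℂ) * ((0 + 0) / 2) = 0 by norm_num, add_zero] at h
    refine h.congr' ?_
    filter_upwards [self_mem_nhdsWithin] with w hw
    have hw0 : w ≠ 0 := hw
    show (z:ℂ)^2/2 + w * ((Rr (w * z) / w ^ 3 + Rr (-(w * z)) / w ^ 3) / 2) = _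
    simp only [Rr, Complex.cosh]
    field_simp [hw0]
    ring
  have hcosh : Tendsto (fun w : ℂ => Complex.cosh (w * (z : ℂ))) (𝓝[≠] 0) (𝓝 1) := by
    have : Tendsto (fun w : ℂ => Complex.cosh (w * (z : ℂ))) (𝓝 0) (𝓝 1) := by
      have hc : Continuous (fun w : ℂ => Complex.cosh (w * (z : ℂ))) := by fun_prop
      simpa using hc.tendsto 0
    exact this.mono_left nhdsWithin_le_nhds
  -- main w-limit
  have hg : Tendsto (fun w : ℂ => (a ^ 2 / 2 - b ^ 2 / (2 * w ^ 2)) *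
        (Complex.tanh (w * (z : ℂ)) / w)
      + (a * b / w ^ 2) * (1 - 1 / Complex.cosh (w * (z : ℂ)))
      + (b ^ 2 / (2 * w ^ 2)) * (z : ℂ)) (𝓝[≠] 0)
      (𝓝 (((z : ℂ) / 2) * (a ^ 2 + a * b * (z : ℂ) + (b ^ 2 / 3) * (z : ℂ) ^ 2))) := by
    have hw2 : Tendsto (fun w : ℂ => w ^ 2) (𝓝[≠] 0) (𝓝 0) := by
      simpa using ((continuous_pow 2).tendsto (0 : ℂ)).mono_left
        (nhdsWithin_le_nhds (s := {(0 : ℂ)}ᶜ))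
    have hsodw : Tendsto (fun w : ℂ => Complex.sinh (w * (z : ℂ)) / w) (𝓝[≠] 0)
        (𝓝 ((z : ℂ) + 0 * ((z : ℂ) ^ 3 / 6))) := by
      refine (tendsto_const_nhds.add (hw2.mul hphi)).congr' ?_
      filter_upwards [self_mem_nhdsWithin] with w hw
      have hw0 : w ≠ 0 := hw
      show (z : ℂ) + w ^ 2 * ((Complex.sinh (w * (z : ℂ)) / w - (z : ℂ)) / w ^ 2) = _
      field_simp [hw0]
      ring
    have hA : Tendsto (fun w : ℂ => (a ^ 2 / 2) * (Complex.tanh (w * (z : ℂ)) / w)) (𝓝[≠] 0)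
        (𝓝 ((a ^ 2 / 2) * (((z : ℂ) + 0 * ((z : ℂ) ^ 3 / 6)) / 1))) := by
      refine tendsto_const_nhds.mul ((hsodw.div hcosh one_ne_zero).congr' ?_)
      filter_upwards [] with w
      show Complex.sinh (w * (z : ℂ)) / w / Complex.cosh (w * (z : ℂ)) = _
      rw [Complex.tanh_eq_sinh_div_cosh, div_div, div_div]
      ring
    have hC : Tendsto (fun w : ℂ => (a * b / w ^ 2) * (1 - 1 / Complex.cosh (w * (z : ℂ))))
        (𝓝[≠] 0) (𝓝 (a * b * ((z : ℂ) ^ 2 / 2) / 1)) := by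
      refine ((tendsto_const_nhds.mul hpsi).div hcosh one_ne_zero).congr' ?_
      filter_upwards [self_mem_nhdsWithin, hcosh.eventually_ne one_ne_zero] with w hw hc
      have hw0 : w ≠ 0 := hw
      show a * b * ((Complex.cosh (w * (z : ℂ)) - 1) / w ^ 2) / Complex.cosh (w * (z : ℂ)) = _
      field_simp [hw0, hc]
    have hB : Tendsto (fun w : ℂ =>
        (b ^ 2 / 2) * (((z : ℂ) - Complex.tanh (w * (z : ℂ)) / w) / w ^ 2)) (𝓝[≠] 0)
        (𝓝 ((b ^ 2 / 2) * (((z : ℂ) * ((z : ℂ) ^ 2 / 2) - (z : ℂ) ^ 3 / 6) / 1))) := by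
      refine tendsto_const_nhds.mul
        ((((tendsto_const_nhds.mul hpsi).sub hphi).div hcosh one_ne_zero).congr' ?_)
      filter_upwards [self_mem_nhdsWithin, hcosh.eventually_ne one_ne_zero] with w hw hc
      have hw0 : w ≠ 0 := hw
      show ((z : ℂ) * ((Complex.cosh (w * (z : ℂ)) - 1) / w ^ 2)
          - (Complex.sinh (w * (z : ℂ)) / w - (z : ℂ)) / w ^ 2) / Complex.cosh (w * (z : ℂ)) = _
      rw [Complex.tanh_eq_sinh_div_cosh]
      set sn := Complex.sinh (w * (z : ℂ)) with hsn
      set ch := Complex.cosh (w * (z : ℂ)) with hch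
      field_simp [hw0, hc]
      ring
    have hsum := (hA.add hC).add hB
    have hval : (a ^ 2 / 2) * (((z : ℂ) + 0 * ((z : ℂ) ^ 3 / 6)) / 1)
        + a * b * ((z : ℂ) ^ 2 / 2) / 1
        + (b ^ 2 / 2) * (((z : ℂ) * ((z : ℂ) ^ 2 / 2) - (z : ℂ) ^ 3 / 6) / 1)
        = ((z : ℂ) / 2) * (a ^ 2 + a * b * (z : ℂ) + (b ^ 2 / 3) * (z : ℂ) ^ 2) := by
      ring
    rw [hval] at hsum
    refine hsum.congr' ?_
    filter_upwards [self_mem_nhdsWithin] with w hw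
    have hw0 : w ≠ 0 := hw
    show (a ^ 2 / 2) * (Complex.tanh (w * (z : ℂ)) / w)
        + (a * b / w ^ 2) * (1 - 1 / Complex.cosh (w * (z : ℂ)))
        + (b ^ 2 / 2) * (((z : ℂ) - Complex.tanh (w * (z : ℂ)) / w) / w ^ 2) = _
    ring
  -- substitute w = csqrt (2c)
  have hsq : ∀ c : ℂ, c ≠ 0 → (csqrt (2 * c)) ^ 2 = 2 * c := by
    intro c hc
    have h2c : (2 * c : ℂ) ≠ 0 := by simpa using hc
    rw [csqrt, sq, ← Complex.cpow_add _ _ h2c]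
    norm_num
  have hsub : Tendsto (fun c : ℂ => csqrt (2 * c)) (𝓝[≠] 0) (𝓝[≠] 0) := by
    apply tendsto_nhdsWithin_of_tendsto_nhds_of_eventually_within
    · have hcp := Complex.continuousAt_cpow_zero_of_re_pos (z := (1 : ℂ) / 2) (by norm_num)
      have hp2 : Tendsto (fun c : ℂ => ((2 * c, (1 : ℂ) / 2) : ℂ × ℂ)) (𝓝 0)
          (𝓝 ((0 : ℂ), (1 : ℂ) / 2)) := by
        have hpair : Continuous (fun c : ℂ => ((2 * c, (1 : ℂ) / 2) : ℂ × ℂ)) := by fun_prop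
        simpa using hpair.tendsto 0
      have h := Filter.Tendsto.comp hcp hp2
      simp only [Function.comp_def] at h
      have h2 : ((0 : ℂ)) ^ ((1 : ℂ) / 2) = 0 := Complex.zero_cpow (by norm_num)
      have h' := h.mono_left (nhdsWithin_le_nhds (s := {(0 : ℂ)}ᶜ))
      convert h' using 2
      · rfl
      exact h2.symm
    · filter_upwards [self_mem_nhdsWithin] with c hc
      have hc0 : c ≠ 0 := hc
      show csqrt (2 * c) ≠ 0
      rw [csqrt]
      simp [Complex.cpow_eq_zero_iff, hc0]
  have hmain := hg.comp hsub
  refine hmain.congr' ?_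
  filter_upwards [self_mem_nhdsWithin] with c hc
  have hc0 : c ≠ 0 := hc
  have hw2 := hsq c hc0
  simp only [Function.comp, Tf, Sf, if_neg hc0, hw2]
  ring
end
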